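/- Let G be a graph with a partition of V(G) into twin sets T₁,…,T_k and let S ⊆ V(G). Two vertices u ∈ T_i ∩ S and v ∈ T_{i'} ∩ S lie in the same connected component of G[S] if and only if T_i and T_{i'} are reachable in S, i.e., either T_i = T_{i'} is a clique, or there is a sequence of twin sets T_{i_0} = T_i, T_{i_1}, …, T_{i_ℓ} = T_{i'} with ℓ ≥ 1 such that each T_{i_j} intersects S and consecutive sets in the sequence are adjacent. -/
import Mathlib


variable {V : Type*}

/-- Two vertex sets are adjacent if some edge joins them. -/
def SetsAdj (G : SimpleGraph V) (A B : Set V) : Prop :=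
  ∃ a ∈ A, ∃ b ∈ B, G.Adj a b

/-- `u` and `v` are connected inside the induced subgraph `G[S]`. -/
def ReachIn (G : SimpleGraph V) (S : Set V) (u v : V) : Prop :=
  ∃ (hu : u ∈ S) (hv : v ∈ S), (G.induce S).Reachable ⟨u, hu⟩ ⟨v, hv⟩

/-- `C` is (the vertex set of) a connected component of the induced subgraph `G[S]`. -/
def IsCompOf (G : SimpleGraph V) (S C : Set V) : Prop :=
  ∃ v ∈ S, C = {u | ReachIn G S u v}

/-- A safe set: nonempty, and no component of `G[S]` is adjacent to a larger
component of `G - S`. -/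
def IsSafeSet (G : SimpleGraph V) (S : Set V) : Prop :=
  S.Nonempty ∧ ∀ C D : Set V, IsCompOf G S C → IsCompOf G Sᶜ D →
    SetsAdj G C D → D.ncard ≤ C.ncard

/-- A connected safe set. -/
def IsConnSafeSet (G : SimpleGraph V) (S : Set V) : Prop :=
  IsSafeSet G S ∧ (G.induce S).Connected

/-- The safe number: minimum size of a safe set. -/
noncomputable def sNum (G : SimpleGraph V) : ℕ :=
  sInf {n | ∃ S : Set V, IsSafeSet G S ∧ S.ncard = n}

/-- The connected safe number: minimum size of a connected safe set. -/
noncomputable def csNum (G : SimpleGraph V) : ℕ :=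
  sInf {n | ∃ S : Set V, IsConnSafeSet G S ∧ S.ncard = n}

/-- Two vertices are twins if they have the same neighbors, apart from each other. -/
def AreTwins (G : SimpleGraph V) (u v : V) : Prop :=
  G.neighborSet u \ {v} = G.neighborSet v \ {u}

/-- Two twin sets are adjacent: every vertex of one is adjacent to every
(distinct) vertex of the other. -/
def TwinSetsAdj (G : SimpleGraph V) (A B : Set V) : Prop :=
  ∀ a ∈ A, ∀ b ∈ B, a ≠ b → G.Adj a b

/-- Twin sets `T i` and `T i'` are reachable in `S`: either they are equal and form
a clique, or there is a sequence of twin sets, each meeting `S`, starting at `T i`,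
ending at `T i'`, with consecutive sets adjacent. -/
def ReachableTwinSets {k : ℕ} (G : SimpleGraph V) (T : Fin k → Set V) (S : Set V)
    (i i' : Fin k) : Prop :=
  (i = i' ∧ G.IsClique (T i)) ∨
  ∃ ℓ : ℕ, 1 ≤ ℓ ∧ ∃ f : Fin (ℓ + 1) → Fin k, f 0 = i ∧ f (Fin.last ℓ) = i' ∧
    (∀ j, (T (f j) ∩ S).Nonempty) ∧
    ∀ j : Fin ℓ, TwinSetsAdj G (T (f j.castSucc)) (T (f j.succ))

lemma twin_helper (G : SimpleGraph V) {a b c : V} (h : AreTwins G a b)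
    (hac : G.Adj a c) (hcb : c ≠ b) : G.Adj b c := by
  have hm : c ∈ G.neighborSet a \ {b} := ⟨hac, hcb⟩
  rw [AreTwins, Set.ext_iff] at h
  exact ((h c).1 hm).1

lemma twin_clique (G : SimpleGraph V) {A : Set V}
    (htw : ∀ u ∈ A, ∀ v ∈ A, AreTwins G u v) {a b : V}
    (ha : a ∈ A) (hb : b ∈ A) (hab : G.Adj a b) : G.IsClique A := by
  have key : ∀ c ∈ A, c ≠ a → G.Adj a c := by
    intro c hc hca
    by_cases hcb : c = b
    · subst hcb; exact hab
    · exact (twin_helper G (htw b hb c hc) hab.symm hca.symm).symm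
  intro x hx y hy hxy
  by_cases hxa : x = a
  · subst hxa; exact key y hy (Ne.symm hxy)
  · by_cases hya : y = a
    · subst hya; exact (key x hx hxa).symm
    · exact (twin_helper G (htw a ha y hy) (key x hx hxa) hxy).symm

lemma adj_twinSetsAdj (G : SimpleGraph V) {k : ℕ} (T : Fin k → Set V)
    (hcover : ∀ v : V, ∃! i, v ∈ T i)
    (htwin : ∀ i, ∀ u ∈ T i, ∀ v ∈ T i, AreTwins G u v)
    {ia ib : Fin k} {a b : V} (ha : a ∈ T ia) (hb : b ∈ T ib) (hab : G.Adj a b) :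
    TwinSetsAdj G (T ia) (T ib) := by
  by_cases hii : ia = ib
  · subst hii
    have hcl := twin_clique G (htwin ia) ha hb hab
    intro x hx y hy hxy
    exact hcl hx hy hxy
  · have hdisj : ∀ x ∈ T ia, ∀ y ∈ T ib, x ≠ y := by
      intro x hx y hy hxy
      subst hxy
      exact hii ((hcover x).unique hx hy)
    intro x hx y hy _
    have hbx : G.Adj x b := by
      by_cases hxa : x = a
      · subst hxa; exact hab
      · exact twin_helper G (htwin ia a ha x hx) hab (hdisj x hx b hb).symm
    by_cases hyb : y = b
    · subst hyb; exact hbx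
    · exact (twin_helper G (htwin ib b hb y hy) hbx.symm (hdisj x hx y hy)).symm

lemma reachIn_refl (G : SimpleGraph V) {S : Set V} {u : V} (hu : u ∈ S) :
    ReachIn G S u u := ⟨hu, hu, SimpleGraph.Reachable.refl _⟩

lemma reachIn_step (G : SimpleGraph V) {S : Set V} {u a b : V}
    (h : ReachIn G S u a) (hb : b ∈ S) (hab : G.Adj a b) : ReachIn G S u b := by
  obtain ⟨hu, ha, hr⟩ := h
  refine ⟨hu, hb, hr.trans (SimpleGraph.Adj.reachable ?_)⟩
  show (G.induce S).Adj ⟨a, ha⟩ ⟨b, hb⟩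
  simpa using hab

theorem stmt7 (G : SimpleGraph V) (S : Set V) {k : ℕ} (T : Fin k → Set V)
    (hcover : ∀ v : V, ∃! i, v ∈ T i)
    (htwin : ∀ i, ∀ u ∈ T i, ∀ v ∈ T i, AreTwins G u v)
    (i i' : Fin k) (u v : V)
    (hu : u ∈ T i ∩ S) (hv : v ∈ T i' ∩ S) (huv : u ≠ v) :
    ReachIn G S u v ↔ ReachableTwinSets G T S i i' := by
  classical
  constructor
  · rintro ⟨hu', hv', hr⟩
    obtain ⟨p⟩ := hr
    have hn1 : 1 ≤ p.length := by
      by_contra h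
      have h0 : p.length = 0 := by omega
      have := SimpleGraph.Walk.eq_of_length_eq_zero h0
      exact huv (congrArg Subtype.val this)
    right
    refine ⟨p.length, hn1, fun j => (hcover (p.getVert j.1).1).choose, ?_, ?_, ?_, ?_⟩
    · have h0 : p.getVert (0 : Fin (p.length + 1)).1 = ⟨u, hu'⟩ := p.getVert_zero
      exact ((hcover _).choose_spec.2 i (by rw [h0]; exact hu.1)).symm
    · have h0 : p.getVert (Fin.last p.length).1 = ⟨v, hv'⟩ := p.getVert_length
      exact ((hcover _).choose_spec.2 i' (by rw [h0]; exact hv.1)).symm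
    · intro j
      exact ⟨(p.getVert j.1).1, (hcover (p.getVert j.1).1).choose_spec.1,
        (p.getVert j.1).2⟩
    · intro j
      have hadj : G.Adj (p.getVert j.1).1 (p.getVert (j.1 + 1)).1 := by
        have := p.adj_getVert_succ j.2
        simpa using this
      exact adj_twinSetsAdj G T hcover htwin
        (hcover (p.getVert j.1).1).choose_spec.1
        (hcover (p.getVert (j.1 + 1)).1).choose_spec.1 hadj
  · rintro (⟨rfl, hcl⟩ | ⟨ℓ, hℓ, f, hf0, hfl, hfS, hadj⟩)
    · have hA : G.Adj u v := hcl hu.1 hv.1 huv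
      refine ⟨hu.2, hv.2, SimpleGraph.Adj.reachable ?_⟩
      show (G.induce S).Adj ⟨u, hu.2⟩ ⟨v, hv.2⟩
      simpa using hA
    · set g : Fin (ℓ + 1) → V := fun j =>
        if j = 0 then u else if j = Fin.last ℓ then v else (hfS j).choose with hg
      have hgmem : ∀ j, g j ∈ T (f j) ∩ S := by
        intro j
        by_cases h0 : j = 0
        · have hgj : g j = u := by rw [hg]; dsimp only; rw [if_pos h0]
          rw [hgj, h0, hf0]; exact hu
        · by_cases hl : j = Fin.last ℓ
          · have hgj : g j = v := by rw [hg]; dsimp only; rw [if_neg h0, if_pos hl]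
            rw [hgj, hl, hfl]; exact hv
          · have hgj : g j = (hfS j).choose := by
              rw [hg]; dsimp only; rw [if_neg h0, if_neg hl]
            rw [hgj]; exact (hfS j).choose_spec
      have key : ∀ m : ℕ, ∀ hm : m ≤ ℓ, ReachIn G S u (g ⟨m, by omega⟩) := by
        intro m
        induction m with
        | zero =>
          intro _
          have h0 : g ⟨0, by omega⟩ = u := by
            rw [hg]; dsimp only
            rw [if_pos (show (⟨0, by omega⟩ : Fin (ℓ + 1)) = 0 from rfl)]
          rw [h0]; exact reachIn_refl G hu.2
        | succ m ih =>
          intro hm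
          have hR := ih (by omega)
          by_cases hab : g ⟨m, by omega⟩ = g ⟨m + 1, by omega⟩
          · rw [← hab]; exact hR
          · have hmlt : m < ℓ := by omega
            have hTS := hadj ⟨m, hmlt⟩
            have hAdj : G.Adj (g ⟨m, by omega⟩) (g ⟨m + 1, by omega⟩) :=
              hTS _ (hgmem ⟨m, by omega⟩).1 _ (hgmem ⟨m + 1, by omega⟩).1 hab
            exact reachIn_step G hR (hgmem ⟨m + 1, by omega⟩).2 hAdj
      have hfin := key ℓ le_rfl
      have hgl : g ⟨ℓ, by omega⟩ = v := by
        have hlast : (⟨ℓ, by omega⟩ : Fin (ℓ + 1)) = Fin.last ℓ := rfl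
        have hne : (Fin.last ℓ) ≠ 0 := by
          intro h
          have := congrArg Fin.val h
          simp [Fin.last] at this
          omega
        rw [hg]; dsimp only; rw [hlast, if_neg hne, if_pos rfl]
      rwa [hgl] at hfin
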